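/- Let G be a primitive permutation group on a finite set X containing an abelian semiregular subgroup H, and let Γ be a G-invariant digraph with symbol 𝕊 relative to H. If λ is an eigenvalue of Γ with λ ≠ val(Γ) (the valency of Γ), then the set K_{𝕊,λ} = {χ ∈ H* : det(χ(𝕊) − λI) = 0} generates the full dual group H*. -/

import Mathlib

open MulAction Pointwise
open scoped Classical

/-- Characters of a finite abelian group form a finite group. -/
lemma stmt15.auxFinite (Hc : Type*) [CommGroup Hc] [Finite Hc] : Finite (Hc →* ℂˣ) := by
  obtain ⟨e⟩ := CommGroup.monoidHom_mulEquiv_of_hasEnoughRootsOfUnity Hc ℂ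
  exact Finite.of_equiv Hc e.symm.toEquiv

/-- Orthogonality: the sum of all character values at a nontrivial element vanishes. -/
lemma stmt15.auxSum (Hc : Type*) [CommGroup Hc] [Finite Hc] [Fintype (Hc →* ℂˣ)]
    {h : Hc} (hh : h ≠ 1) : ∑ χ : Hc →* ℂˣ, ((χ h : ℂˣ) : ℂ) = 0 := by
  obtain ⟨ψ, hψ⟩ := CommGroup.exists_apply_ne_one_of_hasEnoughRootsOfUnity Hc ℂ hh
  have key : ((ψ h : ℂˣ) : ℂ) * ∑ χ : Hc →* ℂˣ, ((χ h : ℂˣ) : ℂ)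
      = ∑ χ : Hc →* ℂˣ, ((χ h : ℂˣ) : ℂ) := by
    rw [Finset.mul_sum]
    refine Fintype.sum_equiv (Equiv.mulLeft ψ) _ _ fun χ => ?_
    simp [Units.val_mul]
  have h2 : (((ψ h : ℂˣ) : ℂ) - 1) * ∑ χ : Hc →* ℂˣ, ((χ h : ℂˣ) : ℂ) = 0 := by
    rw [sub_mul, one_mul, key, sub_self]
  rcases mul_eq_zero.mp h2 with h3 | h3
  · refine absurd (Units.ext ?_) hψ
    rw [Units.val_one]
    linear_combination h3
  · exact h3

/-- A proper subgroup of the character group has a nontrivial common kernel. -/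
lemma stmt15.auxAnn (Hc : Type*) [CommGroup Hc] [Finite Hc]
    (K : Subgroup (Hc →* ℂˣ)) (hK : K ≠ ⊤) :
    ∃ n : Hc, n ≠ 1 ∧ ∀ χ ∈ K, χ n = 1 := by
  haveI : Finite (Hc →* ℂˣ) := stmt15.auxFinite Hc
  haveI : NeZero (Monoid.exponent (Hc →* ℂˣ)) :=
    ⟨Monoid.exponent_ne_zero_of_finite (G := Hc →* ℂˣ)⟩
  let ev : Hc →* ((Hc →* ℂˣ) →* ℂˣ) :=
    { toFun := fun h =>
        { toFun := fun χ => χ h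
          map_one' := rfl
          map_mul' := fun χ ψ => rfl }
      map_one' := by ext χ; simp
      map_mul' := fun a b => by ext χ; simp }
  have hinj : Function.Injective ev := by
    rw [injective_iff_map_eq_one]
    intro a ha
    by_contra h1
    obtain ⟨ψ, hψ⟩ := CommGroup.exists_apply_ne_one_of_hasEnoughRootsOfUnity Hc ℂ h1
    have h2 := DFunLike.congr_fun ha ψ
    exact hψ h2
  have hsurj : Function.Surjective ev := by
    letI : Fintype Hc := Fintype.ofFinite _
    letI : Fintype (Hc →* ℂˣ) := Fintype.ofFinite _
    letI : Fintype ((Hc →* ℂˣ) →* ℂˣ) := by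
      haveI : Finite ((Hc →* ℂˣ) →* ℂˣ) := by
        obtain ⟨e⟩ := CommGroup.monoidHom_mulEquiv_of_hasEnoughRootsOfUnity (Hc →* ℂˣ) ℂ
        exact Finite.of_equiv _ e.symm.toEquiv
      exact Fintype.ofFinite _
    have hcard : Fintype.card ((Hc →* ℂˣ) →* ℂˣ) = Fintype.card Hc := by
      obtain ⟨e1⟩ := CommGroup.monoidHom_mulEquiv_of_hasEnoughRootsOfUnity (Hc →* ℂˣ) ℂ
      obtain ⟨e2⟩ := CommGroup.monoidHom_mulEquiv_of_hasEnoughRootsOfUnity Hc ℂ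
      rw [Fintype.card_congr e1.toEquiv, Fintype.card_congr e2.toEquiv]
    exact ((Fintype.bijective_iff_injective_and_card ev).mpr ⟨hinj, hcard.symm⟩).2
  obtain ⟨ψ, hψK⟩ : ∃ ψ : Hc →* ℂˣ, ψ ∉ K := by
    by_contra hc
    push_neg at hc
    exact hK (Subgroup.eq_top_iff' K |>.mpr hc)
  haveI : K.Normal := ⟨fun a ha g => by
    have hc : g * a * g⁻¹ = a := MonoidHom.ext fun y => by
      rw [MonoidHom.mul_apply, MonoidHom.mul_apply, MonoidHom.inv_apply, mul_comm (g y),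
        mul_inv_cancel_right]
    rwa [hc]⟩
  have hq : (QuotientGroup.mk ψ : (Hc →* ℂˣ) ⧸ K) ≠ 1 := by
    rwa [ne_eq, QuotientGroup.eq_one_iff]
  obtain ⟨Φ₀, hΦ₀⟩ := CommGroup.exists_apply_ne_one_of_hasEnoughRootsOfUnity
    ((Hc →* ℂˣ) ⧸ K) ℂ hq
  obtain ⟨n, hn⟩ := hsurj (Φ₀.comp (QuotientGroup.mk' K))
  refine ⟨n, ?_, ?_⟩
  · rintro rfl
    apply hΦ₀
    have h2 := DFunLike.congr_fun hn ψ
    simp only [map_one] at h2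
    rw [MonoidHom.comp_apply] at h2
    exact h2.symm.trans (by simp [ev])
  · intro χ hχ
    have h2 := DFunLike.congr_fun hn χ
    have h3 : (QuotientGroup.mk χ : (Hc →* ℂˣ) ⧸ K) = 1 := (QuotientGroup.eq_one_iff χ).mpr hχ
    rw [MonoidHom.comp_apply, QuotientGroup.mk'_apply, h3, map_one] at h2
    exact h2

/-- If `G` is primitive with abelian semiregular subgroup `H`, and `λ ≠ val(Γ)` is an
eigenvalue of a `G`-invariant digraph `Γ` with symbol `𝕊`, then
`K_{𝕊,λ} = {χ : det(χ(𝕊) − λI) = 0}` generates the full dual group `H*`. -/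
theorem stmt15 {G X : Type*} [Group G] [Fintype X] [MulAction G X]
    (htrans : ∀ x y : X, ∃ g : G, g • x = y)
    (hprim : ∀ B : Set (Set X), Setoid.IsPartition B →
      (∀ (g : G), ∀ b ∈ B, g • b ∈ B) →
      (∀ b ∈ B, ∃ z : X, b = {z}) ∨ B = {Set.univ})
    (H : Subgroup G) [Fintype H]
    (habel : ∀ a b : H, a * b = b * a)
    (hsemi : ∀ (h : H) (x : X), (h : G) • x = x → h = 1)
    {m : ℕ} (x : Fin m → X)
    (horb : ∀ y : X, ∃ i, y ∈ orbit H (x i))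
    (hdisj : ∀ i j, i ≠ j → orbit H (x i) ≠ orbit H (x j))
    (R : X → X → Prop)
    (hinv : ∀ (g : G) (a b : X), R (g • a) (g • b) ↔ R a b)
    (A : Matrix X X ℂ) (hA : ∀ a b, A a b = if R a b then 1 else 0)
    (S : Fin m → Fin m → Set H)
    (hS : ∀ i j, S i j = {h : H | R (x i) ((h : G) • x j)})
    (d : ℕ) (hval : ∀ a : X, (Finset.univ.filter fun b => R a b).card = d)
    (lam : ℂ) (hlam : ∃ w : X → ℂ, w ≠ 0 ∧ A.mulVec w = lam • w)
    (hne : lam ≠ (d : ℂ))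
    (Kchar : Set (H →* ℂˣ))
    (hK : Kchar = {χ : H →* ℂˣ | Matrix.det
        ((Matrix.of fun i j : Fin m => ∑ h : H, if h ∈ S i j then ((χ h : ℂˣ) : ℂ) else 0)
          - lam • (1 : Matrix (Fin m) (Fin m) ℂ)) = 0}) :
    Subgroup.closure Kchar = ⊤ := by
  classical
  by_contra hKtop
  -- abelianness of H
  letI : CommGroup H := { (inferInstance : Group H) with mul_comm := habel }
  haveI : Finite (H →* ℂˣ) := stmt15.auxFinite H
  letI : Fintype (H →* ℂˣ) := Fintype.ofFinite _
  -- the common kernel element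
  obtain ⟨n, hn1, hnK⟩ := stmt15.auxAnn H (Subgroup.closure Kchar) hKtop
  have hnKchar : ∀ χ ∈ Kchar, χ n = 1 := fun χ hχ => hnK χ (Subgroup.subset_closure hχ)
  -- the eigenvalue equation, pointwise
  set E : (X → ℂ) → Prop := fun w => ∀ a, ∑ b, A a b * w b = lam * w a with hE
  have hmem : ∀ w : X → ℂ, A.mulVec w = lam • w ↔ E w := by
    intro w
    constructor
    · intro hw a
      have := congrFun hw a
      simpa [Matrix.mulVec, dotProduct] using this
    · intro hw
      funext a
      simpa [Matrix.mulVec, dotProduct] using hw a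
  -- invariance of A
  have hAeq : ∀ (g : G) (a b : X), A (g • a) (g • b) = A a b := by
    intro g a b
    rw [hA, hA]
    simp [hinv]
  -- translates of eigenfunctions are eigenfunctions
  have hWg : ∀ (g : G) (w : X → ℂ), E w → E (fun a => w (g • a)) := by
    intro g w hw a
    calc ∑ b, A a b * w (g • b)
        = ∑ b, A (g • a) (g • b) * w (g • b) := by
          refine Finset.sum_congr rfl fun b _ => ?_
          rw [hAeq g a b]
      _ = ∑ c, A (g • a) c * w c :=
          Fintype.sum_equiv (MulAction.toPerm g) _ _ (fun b => rfl)
      _ = lam * w (g • a) := hw (g • a)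
  -- the separation relation
  let r : X → X → Prop := fun a b => ∀ w : X → ℂ, E w → w a = w b
  have hr_inv : ∀ (g : G) (a b : X), r a b → r (g • a) (g • b) := by
    intro g a b hab w hw
    exact hab (fun z => w (g • z)) (hWg g w hw)
  let s : Setoid X := ⟨r, ⟨fun a w _ => rfl, fun h w hw => (h w hw).symm,
    fun h1 h2 w hw => (h1 w hw).trans (h2 w hw)⟩⟩
  have hBinv : ∀ (g : G), ∀ b ∈ s.classes, g • b ∈ s.classes := by
    rintro g b ⟨y, rfl⟩
    refine ⟨g • y, ?_⟩
    ext z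
    rw [Set.mem_smul_set_iff_inv_smul_mem]
    constructor
    · intro hz
      have := hr_inv g _ _ hz
      rwa [smul_inv_smul] at this
    · intro hz
      have := hr_inv g⁻¹ _ _ hz
      rwa [inv_smul_smul] at this
  -- primitivity dichotomy
  rcases hprim s.classes s.isPartition_classes hBinv with hsing | huniv
  swap
  · -- all eigenfunctions constant: lam = d, contradiction
    obtain ⟨w, hw0, hwE'⟩ := hlam
    have hwE : E w := (hmem w).mp hwE'
    obtain ⟨a, ha⟩ := Function.ne_iff.mp hw0
    have hall : ∀ b, w b = w a := by
      intro b
      have hb : {z | r z a} ∈ s.classes := ⟨a, rfl⟩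
      rw [huniv, Set.mem_singleton_iff] at hb
      have : b ∈ {z | r z a} := by rw [hb]; trivial
      exact this w hwE
    have hd : ∑ b, A a b * w b = (d : ℂ) * w a := by
      calc ∑ b, A a b * w b = ∑ b, (if R a b then (1:ℂ) else 0) * w a := by
            refine Finset.sum_congr rfl fun b _ => ?_
            rw [hA, hall b]
        _ = (∑ b, if R a b then (1:ℂ) else 0) * w a := by rw [Finset.sum_mul]
        _ = (d : ℂ) * w a := by
            rw [Finset.sum_boole, hval a]
    have := (hwE a).symm.trans hd
    exact hne (mul_right_cancel₀ ha (this.symm)).symm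
  -- separation holds
  have hsep : ∀ a b : X, r a b → a = b := by
    intro a b hab
    have hb : {z | r z b} ∈ s.classes := ⟨b, rfl⟩
    obtain ⟨z, hz⟩ := hsing _ hb
    have ha' : a ∈ {z | r z b} := hab
    have hb' : b ∈ {z | r z b} := fun w hw => rfl
    rw [hz, Set.mem_singleton_iff] at ha' hb'
    exact ha'.trans hb'.symm
  -- the orbit decomposition bijection
  have hbij : Function.Bijective (fun p : Fin m × H => ((p.2 : G) • x p.1 : X)) := by
    constructor
    · rintro ⟨i, h⟩ ⟨j, h'⟩ heq
      simp only at heq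
      have hmemo : x i ∈ orbit H (x j) := by
        refine ⟨h⁻¹ * h', ?_⟩
        show ((h⁻¹ * h' : H) : G) • x j = x i
        push_cast
        rw [mul_smul, ← heq, inv_smul_smul]
      have hij : i = j := by
        by_contra hij
        exact hdisj i j hij (MulAction.orbit_eq_iff.mpr hmemo)
      subst hij
      have : (h'⁻¹ * h : H) = 1 := by
        apply hsemi (h'⁻¹ * h) (x i)
        push_cast
        rw [mul_smul, heq, inv_smul_smul]
      have h2 : h' = h := by rwa [inv_mul_eq_one] at this
      rw [h2]
    · intro y
      obtain ⟨i, hi⟩ := horb y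
      obtain ⟨h, hh⟩ := hi
      exact ⟨(i, h), hh⟩
  let e : Fin m × H ≃ X := Equiv.ofBijective _ hbij
  -- each nonzero character component gives a member of Kchar
  have hcomp : ∀ (χ : H →* ℂˣ) (u : X → ℂ), E u →
      (∀ (k : H) (a : X), u ((k : G) • a) = ((χ k : ℂˣ) : ℂ) * u a) → u ≠ 0 → χ ∈ Kchar := by
    intro χ u hu hueq hu0
    rw [hK]
    simp only [Set.mem_setOf_eq]
    rw [← Matrix.exists_mulVec_eq_zero_iff]
    set v : Fin m → ℂ := fun i => u (x i) with hv
    refine ⟨v, ?_, ?_⟩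
    · obtain ⟨a, ha⟩ := Function.ne_iff.mp hu0
      obtain ⟨⟨i, h⟩, rfl⟩ := hbij.2 a
      intro hv0
      apply ha
      show u ((h : G) • x i) = 0
      rw [hueq h (x i)]
      have : v i = 0 := congrFun hv0 i
      rw [show u (x i) = v i from rfl, this, mul_zero]
    · rw [Matrix.sub_mulVec, Matrix.smul_mulVec, Matrix.one_mulVec]
      have hMv : ∀ i, ∑ j, (∑ h : H, if h ∈ S i j then ((χ h : ℂˣ) : ℂ) else 0) * v j
          = lam * v i := by
        intro i
        have hEi := hu (x i)
        have hsum : ∑ b, A (x i) b * u b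
            = ∑ p : Fin m × H, A (x i) ((p.2 : G) • x p.1) * u ((p.2 : G) • x p.1) := by
          exact (Equiv.sum_comp e (fun b => A (x i) b * u b)).symm
        rw [hsum, Fintype.sum_prod_type] at hEi
        calc ∑ j, (∑ h : H, if h ∈ S i j then ((χ h : ℂˣ) : ℂ) else 0) * v j
            = ∑ j, ∑ h : H, A (x i) ((h : G) • x j) * u ((h : G) • x j) := by
              refine Finset.sum_congr rfl fun j _ => ?_
              rw [Finset.sum_mul]
              refine Finset.sum_congr rfl fun h _ => ?_
              rw [hA, hueq h (x j), hS]
              simp only [Set.mem_setOf_eq]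
              by_cases hR : R (x i) ((h : G) • x j)
              · rw [if_pos hR, if_pos hR, one_mul]
              · rw [if_neg hR, if_neg hR, zero_mul, zero_mul]
          _ = lam * v i := hEi
      funext i
      simp only [Pi.sub_apply, Pi.zero_apply, Pi.smul_apply, smul_eq_mul]
      rw [sub_eq_zero]
      calc (Matrix.of fun i j : Fin m => ∑ h : H, if h ∈ S i j then ((χ h : ℂˣ) : ℂ) else 0).mulVec v i
          = ∑ j, (∑ h : H, if h ∈ S i j then ((χ h : ℂˣ) : ℂ) else 0) * v j := by
            simp [Matrix.mulVec, dotProduct]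
        _ = lam * v i := hMv i
  -- Fourier: every eigenfunction is n-invariant
  have key : ∀ w : X → ℂ, E w → ∀ a, w ((n : G) • a) = w a := by
    intro w hw a
    set F : (H →* ℂˣ) → X → ℂ :=
      fun χ z => ∑ h : H, ((χ h : ℂˣ) : ℂ) * w (((h⁻¹ : H) : G) • z) with hFdef
    have hFE : ∀ χ, E (F χ) := by
      intro χ z
      calc ∑ b, A z b * F χ b
          = ∑ b, ∑ h : H, ((χ h : ℂˣ) : ℂ) * (A z b * w (((h⁻¹ : H) : G) • b)) := by
            refine Finset.sum_congr rfl fun b _ => ?_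
            rw [Finset.mul_sum]
            refine Finset.sum_congr rfl fun h _ => ?_
            ring
        _ = ∑ h : H, ((χ h : ℂˣ) : ℂ) * ∑ b, A z b * w (((h⁻¹ : H) : G) • b) := by
            rw [Finset.sum_comm]
            exact Finset.sum_congr rfl fun h _ => (Finset.mul_sum _ _ _).symm
        _ = ∑ h : H, ((χ h : ℂˣ) : ℂ) * (lam * w (((h⁻¹ : H) : G) • z)) := by
            refine Finset.sum_congr rfl fun h _ => ?_
            rw [hWg ((h⁻¹ : H) : G) w hw z]
        _ = lam * F χ z := by
            rw [hFdef, Finset.mul_sum]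
            refine Finset.sum_congr rfl fun h _ => ?_
            ring
    have hFeq : ∀ (χ : H →* ℂˣ) (k : H) (z : X),
        F χ ((k : G) • z) = ((χ k : ℂˣ) : ℂ) * F χ z := by
      intro χ k z
      have step : F χ ((k : G) • z)
          = ∑ h : H, ((χ (k * h) : ℂˣ) : ℂ) * w ((((k * h)⁻¹ : H) : G) • ((k : G) • z)) :=
        Fintype.sum_equiv (Equiv.mulLeft k⁻¹) _ _ (fun h => by simp only [Equiv.coe_mulLeft]; rw [mul_inv_cancel_left])
      rw [step, Finset.mul_sum]
      refine Finset.sum_congr rfl fun h _ => ?_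
      have hsm : (((k * h)⁻¹ : H) : G) • ((k : G) • z) = ((h⁻¹ : H) : G) • z := by
        have h1 : ((k * h)⁻¹ : H) = h⁻¹ * k⁻¹ := mul_inv_rev k h
        rw [h1]
        push_cast
        rw [mul_smul, inv_smul_smul]
      rw [hsm, map_mul, Units.val_mul]
      ring
    have hsumF : ∀ z, ∑ χ : H →* ℂˣ, F χ z = (Fintype.card (H →* ℂˣ) : ℂ) * w z := by
      intro z
      rw [hFdef]
      rw [Finset.sum_comm]
      rw [Finset.sum_eq_single_of_mem (1 : H) (Finset.mem_univ _)]
      · simp only [inv_one, OneMemClass.coe_one, one_smul]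
        rw [← Finset.sum_mul]
        congr 1
        simp
      · intro h _ hne1
        rw [← Finset.sum_mul, stmt15.auxSum H hne1, zero_mul]
    have hcardne : (Fintype.card (H →* ℂˣ) : ℂ) ≠ 0 := by
      haveI : Nonempty (H →* ℂˣ) := ⟨1⟩
      exact_mod_cast Fintype.card_ne_zero
    apply mul_left_cancel₀ hcardne
    rw [← hsumF, ← hsumF]
    refine Finset.sum_congr rfl fun χ _ => ?_
    by_cases h0 : F χ = 0
    · rw [h0]
      rfl
    · have hχK := hcomp χ (F χ) (hFE χ) (hFeq χ) h0
      rw [hFeq χ n a, hnKchar χ hχK, Units.val_one, one_mul]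
  -- conclude: n fixes every point, contradiction
  obtain ⟨w, hw0, _⟩ := hlam
  obtain ⟨a₀, _⟩ := Function.ne_iff.mp hw0
  have : (n : G) • a₀ = a₀ := hsep _ _ (fun w hw => key w hw a₀)
  exact hn1 (hsemi n a₀ this)
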